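/- Let k ≥ 2 be an even integer, p a prime, and G an even polynomial with real coefficients of degree ≥ 2 satisfying G(0) = 1 and G(−1) = G(−2) = 0, and let U be the associated contour integral. Then for every real j > 0 there exists a constant C > 0, depending only on j, k, p and G, such that |U(y)| ≤ C·y^{−j} for all real y ≥ 1. -/

import Mathlib

/-- `U(y) = (1/iπ) ∫_{(2)} ζ^{(p)}(1+2s) (Γ(s+k/2)/Γ(k/2))² G(s)² y^{-s} ds/s`,
written as an integral over the vertical line `s = 2 + it`, where
`ζ^{(p)}(w) = ζ(w)(1 - p^{-w})`. -/
noncomputable def Uint (k p : ℕ) (G : Polynomial ℝ) (y : ℝ) : ℂ :=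
  (1 / Real.pi : ℂ) * ∫ t : ℝ,
    riemannZeta (1 + 2 * (2 + (t : ℂ) * Complex.I)) *
      (1 - (p : ℂ) ^ (-(1 + 2 * (2 + (t : ℂ) * Complex.I)))) *
      (Complex.Gamma ((2 + (t : ℂ) * Complex.I) + (k : ℂ) / 2) /
        Complex.Gamma ((k : ℂ) / 2)) ^ 2 *
      (Polynomial.aeval (2 + (t : ℂ) * Complex.I) G) ^ 2 *
      (y : ℂ) ^ (-(2 + (t : ℂ) * Complex.I)) / (2 + (t : ℂ) * Complex.I)

open Complex MeasureTheory Polynomial Set Filter Finset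
open scoped Interval Topology

namespace Stmt11Aux

lemma norm_Gamma_le {z : ℂ} (hz : 0 < z.re) : ‖Complex.Gamma z‖ ≤ Real.Gamma z.re := by
  rw [Complex.Gamma_eq_integral hz, Real.Gamma_eq_integral hz]
  refine (norm_integral_le_integral_norm _).trans_eq ?_
  refine setIntegral_congr_fun measurableSet_Ioi (fun x hx => ?_)
  rw [norm_mul,
    Complex.norm_cpow_eq_rpow_re_of_pos hx, Complex.norm_real, Real.norm_eq_abs,
    _root_.abs_of_nonneg (Real.exp_pos _).le, Complex.sub_re, Complex.one_re]

lemma Gamma_add_nat {z : ℂ} (hz : 0 < z.re) (m : ℕ) :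
    Complex.Gamma (z + m) = Complex.Gamma z * ∏ i ∈ Finset.range m, (z + i) := by
  induction m with
  | zero => simp
  | succ n ih =>
    have hzn : (z + (n : ℂ)) ≠ 0 := by
      intro h
      have : (z + (n : ℂ)).re = 0 := by rw [h]; simp
      simp only [Complex.add_re, Complex.natCast_re] at this
      have : (0:ℝ) ≤ (n:ℝ) := Nat.cast_nonneg n
      linarith
    have h1 : (z + ((n+1 : ℕ) : ℂ)) = (z + n) + 1 := by push_cast; ring
    rw [h1, Complex.Gamma_add_one _ hzn, ih, Finset.prod_range_succ]
    ring

lemma norm_Gamma_decay {z : ℂ} (hz : 0 < z.re) (m : ℕ) :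
    ‖Complex.Gamma z‖ * |z.im| ^ m ≤ Real.Gamma (z.re + m) := by
  have h1 : ‖Complex.Gamma z‖ * |z.im| ^ m ≤ ‖Complex.Gamma (z + m)‖ := by
    rw [Gamma_add_nat hz m, norm_mul, norm_prod]
    gcongr ‖Complex.Gamma z‖ * ?_
    have : |z.im| ^ m = ∏ _i ∈ Finset.range m, |z.im| := by
      rw [Finset.prod_const, Finset.card_range]
    rw [this]
    refine Finset.prod_le_prod (fun i _ => abs_nonneg _) (fun i _ => ?_)
    calc |z.im| = |(z + (i:ℂ)).im| := by simp
    _ ≤ ‖z + (i:ℂ)‖ := Complex.abs_im_le_norm _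
  refine h1.trans ?_
  have hre : 0 < (z + (m:ℂ)).re := by
    simp only [Complex.add_re, Complex.natCast_re]
    have : (0:ℝ) ≤ (m:ℝ) := Nat.cast_nonneg m
    linarith
  have := norm_Gamma_le hre
  simpa using this

lemma Real.Gamma_mono {u v : ℝ} (hu : 2 ≤ u) (huv : u ≤ v) :
    Real.Gamma u ≤ Real.Gamma v :=
  Real.Gamma_strictMonoOn_Ici.monotoneOn (mem_Ici.mpr hu) (mem_Ici.mpr (hu.trans huv)) huv

lemma Gamma_bound {z : ℂ} {M : ℝ} (h2 : 2 ≤ z.re) (hM : z.re ≤ M) (m : ℕ) :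
    ‖Complex.Gamma z‖ ≤ Real.Gamma (M + m) / max 1 |z.im| ^ m := by
  have hz : 0 < z.re := by linarith
  have hmax : (0:ℝ) < max 1 |z.im| := lt_of_lt_of_le one_pos (le_max_left _ _)
  rw [le_div_iff₀ (pow_pos hmax m)]
  rcases le_total |z.im| 1 with h | h
  · rw [max_eq_left h, one_pow, mul_one]
    refine (norm_Gamma_le hz).trans ?_
    refine Real.Gamma_mono h2 ?_
    have : (0:ℝ) ≤ (m:ℝ) := Nat.cast_nonneg m
    linarith
  · rw [max_eq_right h]
    refine (norm_Gamma_decay hz m).trans ?_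
    refine Real.Gamma_mono (by linarith [Nat.cast_nonneg (α := ℝ) m]) (by linarith)

lemma zeta_bound {w : ℂ} (hw : 2 ≤ w.re) :
    ‖riemannZeta w‖ ≤ ∑' n : ℕ, 1 / (n:ℝ) ^ (2:ℝ) := by
  have hw1 : 1 < w.re := by linarith
  rw [zeta_eq_tsum_one_div_nat_cpow hw1]
  have hnorm : ∀ n : ℕ, ‖1 / (n:ℂ) ^ w‖ = 1 / (n:ℝ) ^ w.re := by
    intro n
    rcases Nat.eq_zero_or_pos n with rfl | hn
    · rw [Nat.cast_zero, Nat.cast_zero, Complex.zero_cpow (by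
        intro h; rw [h, Complex.zero_re] at hw1; linarith), Real.zero_rpow (by linarith)]
      simp
    · have hcast : ((n:ℕ):ℂ) = (((n:ℝ)):ℂ) := by norm_cast
      rw [norm_div, norm_one, hcast,
        Complex.norm_cpow_eq_rpow_re_of_pos (by exact_mod_cast hn)]
  have hsum : Summable fun n : ℕ => ‖1 / (n:ℂ) ^ w‖ := by
    simp_rw [hnorm]
    exact (Real.summable_one_div_nat_rpow.mpr hw1)
  have hsum2 : Summable fun n : ℕ => 1 / (n:ℝ) ^ (2:ℝ) :=
    Real.summable_one_div_nat_rpow.mpr one_lt_two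
  refine (norm_tsum_le_tsum_norm hsum).trans ?_
  refine Summable.tsum_le_tsum (fun n => ?_) hsum hsum2
  rw [hnorm]
  rcases Nat.eq_zero_or_pos n with rfl | hn
  · norm_num [Real.zero_rpow (show w.re ≠ 0 by linarith)]
  · have h1n : (1:ℝ) ≤ (n:ℝ) := by exact_mod_cast hn
    refine one_div_le_one_div_of_le (Real.rpow_pos_of_pos (by linarith) _) ?_
    exact Real.rpow_le_rpow_of_exponent_le h1n hw


noncomputable def gg (k p : ℕ) (G : Polynomial ℝ) (y : ℝ) (s : ℂ) : ℂ :=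
  riemannZeta (1 + 2 * s) * (1 - (p : ℂ) ^ (-(1 + 2 * s))) *
    (Complex.Gamma (s + (k : ℂ) / 2) / Complex.Gamma ((k : ℂ) / 2)) ^ 2 *
    (Polynomial.aeval s G) ^ 2 * (y : ℂ) ^ (-s) / s

noncomputable def Kc (k : ℕ) (G : Polynomial ℝ) (σ : ℝ) : ℝ :=
  (∑' n : ℕ, 1 / (n:ℝ) ^ (2:ℝ)) * 2 *
    (Real.Gamma (σ + (k:ℝ)/2 + (G.natDegree + 1)) / Real.Gamma ((k:ℝ)/2)) ^ 2 *
    ((∑ i ∈ Finset.range (G.natDegree + 1), |G.coeff i|) * (σ + 1) ^ G.natDegree) ^ 2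

lemma aeval_bound (G : Polynomial ℝ) {s : ℂ} {R : ℝ} (hR : 1 ≤ R) (hs : ‖s‖ ≤ R) :
    ‖(Polynomial.aeval s G : ℂ)‖ ≤
      (∑ i ∈ Finset.range (G.natDegree + 1), |G.coeff i|) * R ^ G.natDegree := by
  rw [Polynomial.aeval_eq_sum_range]
  refine (norm_sum_le _ _).trans ?_
  rw [Finset.sum_mul]
  refine Finset.sum_le_sum (fun i hi => ?_)
  rw [norm_smul, norm_pow, Real.norm_eq_abs]
  have h1 : ‖s‖ ^ i ≤ R ^ G.natDegree := by
    refine (pow_le_pow_left₀ (norm_nonneg _) hs i).trans ?_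
    exact pow_le_pow_right₀ hR (Nat.lt_succ_iff.mp (Finset.mem_range.mp hi))
  exact mul_le_mul_of_nonneg_left h1 (abs_nonneg _)

lemma gg_bound (k p : ℕ) (hk : 2 ≤ k) (hp : p.Prime) (G : Polynomial ℝ) {σ : ℝ} (hσ : 2 ≤ σ)
    {y : ℝ} (hy : 1 ≤ y) {x t : ℝ} (hx2 : 2 ≤ x) (hxσ : x ≤ σ) :
    ‖gg k p G y ((x:ℂ) + (t:ℂ) * I)‖ ≤ Kc k G σ * ((max 1 |t|) ^ 3)⁻¹ * y ^ (-x) := by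
  set s : ℂ := (x:ℂ) + (t:ℂ) * I with hs
  set T : ℝ := max 1 |t| with hT
  have hT1 : (1:ℝ) ≤ T := le_max_left _ _
  have hT0 : (0:ℝ) < T := lt_of_lt_of_le one_pos hT1
  have hsre : s.re = x := by simp [hs]
  have hsim : s.im = t := by simp [hs]
  have hk2 : (1:ℝ) ≤ (k:ℝ)/2 := by
    have : (2:ℝ) ≤ (k:ℝ) := by exact_mod_cast hk
    linarith
  set d : ℕ := G.natDegree with hd
  set Z : ℝ := ∑' n : ℕ, 1 / (n:ℝ) ^ (2:ℝ) with hZ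
  set Γc : ℝ := Real.Gamma ((k:ℝ)/2) with hΓc
  have hΓcpos : 0 < Γc := Real.Gamma_pos_of_pos (by linarith)
  set Γσ : ℝ := Real.Gamma (σ + (k:ℝ)/2 + (d + 1)) with hΓσ
  set P : ℝ := ∑ i ∈ Finset.range (d + 1), |G.coeff i| with hP
  -- norm of denominator Gamma
  have hkc : ((k:ℂ)/2) = (((k:ℝ)/2 : ℝ) : ℂ) := by push_cast; ring
  have hΓden : ‖Complex.Gamma ((k:ℂ)/2)‖ = Γc := by
    rw [hkc, Complex.Gamma_ofReal, Complex.norm_real, Real.norm_eq_abs,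
      _root_.abs_of_pos hΓcpos]
  -- individual bounds
  have hζ : ‖riemannZeta (1 + 2 * s)‖ ≤ Z := by
    refine zeta_bound ?_
    have : (1 + 2*s).re = 1 + 2*x := by simp [hs]
    rw [this]; linarith
  have hpe : ‖1 - (p:ℂ) ^ (-(1 + 2 * s))‖ ≤ 2 := by
    refine (norm_sub_le _ _).trans ?_
    rw [norm_one]
    have hppos : (0:ℝ) < (p:ℝ) := by exact_mod_cast hp.pos
    have hcast : ((p:ℕ):ℂ) = (((p:ℝ)):ℂ) := by norm_cast
    have : ‖(p:ℂ) ^ (-(1 + 2 * s))‖ ≤ 1 := by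
      rw [hcast, Complex.norm_cpow_eq_rpow_re_of_pos hppos]
      refine Real.rpow_le_one_of_one_le_of_nonpos (by exact_mod_cast hp.one_lt.le) ?_
      have : (-(1 + 2*s)).re = -(1 + 2*x) := by simp [hs]
      rw [this]; linarith
    linarith
  have hΓ : ‖Complex.Gamma (s + (k:ℂ)/2)‖ ≤ Γσ / T ^ (d+1) := by
    have h1 : (s + (k:ℂ)/2).re = x + (k:ℝ)/2 := by
      rw [hkc]; simp [hs]
    have h2 : (s + (k:ℂ)/2).im = t := by
      rw [hkc]; simp [hs]
    have := Gamma_bound (z := s + (k:ℂ)/2) (M := σ + (k:ℝ)/2)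
      (by rw [h1]; linarith) (by rw [h1]; linarith) (d+1)
    rw [h2] at this
    refine this.trans_eq ?_
    rw [hΓσ, hT]
    norm_num
  have hpol : ‖(Polynomial.aeval s G : ℂ)‖ ≤ P * (σ+1)^d * T^d := by
    have hR1 : (1:ℝ) ≤ (σ+1) * T := by
      have := mul_le_mul_of_nonneg_right (by linarith : (1:ℝ) ≤ σ + 1) (le_of_lt hT0)
      linarith [this, hT1]
    have hsR : ‖s‖ ≤ (σ+1) * T := by
      refine (norm_add_le _ _).trans ?_
      have h1 : ‖(x:ℂ)‖ = x := by
        rw [Complex.norm_real, Real.norm_eq_abs, _root_.abs_of_pos (by linarith)]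
      have h2 : ‖(t:ℂ) * I‖ = |t| := by
        rw [norm_mul, Complex.norm_I,
          Complex.norm_real, Real.norm_eq_abs, mul_one]
      rw [h1, h2]
      have ht : |t| ≤ T := le_max_right _ _
      nlinarith [hT1, hT0]
    have := aeval_bound G hR1 hsR
    refine this.trans_eq ?_
    rw [mul_pow, hP, hd]
    ring
  have hy0 : (0:ℝ) < y := by linarith
  have hyn : ‖(y:ℂ) ^ (-s)‖ = y ^ (-x) := by
    rw [Complex.norm_cpow_eq_rpow_re_of_pos hy0]
    congr 1
    simp [hs]
  have hsn : T ≤ ‖s‖ := by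
    rcases max_cases 1 |t| with ⟨h1, h2⟩ | ⟨h1, h2⟩
    · rw [← hT] at h1
      rw [h1]
      calc (1:ℝ) ≤ x := by linarith
      _ = |s.re| := by rw [hsre, _root_.abs_of_pos (by linarith)]
      _ ≤ ‖s‖ := Complex.abs_re_le_norm s
    · rw [← hT] at h1
      rw [h1, ← hsim]
      exact Complex.abs_im_le_norm s
  -- combine
  have hnorm : ‖gg k p G y s‖ =
      ‖riemannZeta (1 + 2*s)‖ * ‖1 - (p:ℂ) ^ (-(1 + 2*s))‖ *
        (‖Complex.Gamma (s + (k:ℂ)/2)‖ / Γc) ^ 2 * ‖(Polynomial.aeval s G : ℂ)‖^2 *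
        ‖(y:ℂ) ^ (-s)‖ / ‖s‖ := by
    simp only [gg, norm_div, norm_mul, norm_pow, hΓden]
  rw [hnorm]
  have hZ0 : 0 ≤ Z := tsum_nonneg (fun n => by positivity)
  calc ‖riemannZeta (1 + 2*s)‖ * ‖1 - (p:ℂ) ^ (-(1 + 2*s))‖ *
        (‖Complex.Gamma (s + (k:ℂ)/2)‖ / Γc) ^ 2 * ‖(Polynomial.aeval s G : ℂ)‖^2 *
        ‖(y:ℂ) ^ (-s)‖ / ‖s‖
      ≤ Z * 2 * ((Γσ / T^(d+1)) / Γc) ^ 2 * (P * (σ+1)^d * T^d)^2 * (y ^ (-x)) / T := by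
        rw [hyn]
        have hΓσpos : 0 < Γσ := by
          rw [hΓσ]
          refine Real.Gamma_pos_of_pos ?_
          have : (0:ℝ) ≤ (d:ℝ) := Nat.cast_nonneg d
          linarith
        gcongr
    _ = (Z * 2 * (Γσ / Γc) ^ 2 * (P * (σ+1)^d) ^ 2) * (T ^ 3)⁻¹ * y ^ (-x) := by
        have hTne : T ≠ 0 := ne_of_gt hT0
        field_simp
        ring
    _ = Kc k G σ * (T ^ 3)⁻¹ * y ^ (-x) := by rw [Kc]

lemma integrable_bound : Integrable (fun t : ℝ => ((max 1 |t|) ^ 2)⁻¹) := by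
  have hcont : Continuous (fun t : ℝ => ((max 1 |t|) ^ 2)⁻¹) := by
    have habs : Continuous fun t : ℝ => |t| := _root_.continuous_abs
    refine Continuous.inv₀ ((continuous_const.max habs).pow 2) ?_
    intro t
    have : (1:ℝ) ≤ max 1 |t| := le_max_left _ _
    positivity
  refine Integrable.mono' ((integrable_inv_one_add_sq).const_mul 2) hcont.aestronglyMeasurable ?_
  refine Eventually.of_forall (fun t => ?_)
  have h1 : (1:ℝ) ≤ max 1 |t| := le_max_left _ _
  rw [Real.norm_eq_abs, _root_.abs_of_pos (by positivity)]
  rcases le_total |t| 1 with h | h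
  · rw [max_eq_left h, one_pow, inv_one,
      show (2:ℝ) * (1 + t^2)⁻¹ = 2 / (1 + t^2) by ring,
      le_div_iff₀ (by positivity)]
    nlinarith [_root_.sq_abs t, abs_nonneg t]
  · rw [max_eq_right h,
      show (2:ℝ) * (1 + t^2)⁻¹ = 2 / (1 + t^2) by ring,
      show (|t|^2)⁻¹ = 1 / t^2 by rw [_root_.sq_abs, one_div],
      div_le_div_iff₀ (by nlinarith [_root_.sq_abs t, abs_nonneg t]) (by positivity)]
    nlinarith [_root_.sq_abs t, abs_nonneg t]


lemma gg_diffOn (k p : ℕ) (hk : 2 ≤ k) (hp : p.Prime) (G : Polynomial ℝ) {y : ℝ}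
    (hy : 1 ≤ y) : DifferentiableOn ℂ (gg k p G y) {s : ℂ | 0 < s.re} := by
  intro s hs
  have hs0 : 0 < s.re := hs
  have hsne : s ≠ 0 := by
    intro h; rw [h, Complex.zero_re] at hs0; exact lt_irrefl _ hs0
  refine DifferentiableAt.differentiableWithinAt ?_
  have hζ : DifferentiableAt ℂ (fun s : ℂ => riemannZeta (1 + 2 * s)) s := by
    have hne : (1 : ℂ) + 2 * s ≠ 1 := by
      intro h
      apply hsne
      have : (2:ℂ) * s = 0 := by linear_combination h
      simpa using this
    exact (differentiableAt_riemannZeta hne).comp s (by fun_prop)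
  have hpe : DifferentiableAt ℂ (fun s : ℂ => 1 - (p:ℂ) ^ (-(1 + 2 * s))) s := by
    have hpne : (p:ℂ) ≠ 0 := by
      exact_mod_cast hp.pos.ne'
    exact (differentiableAt_const 1).sub
      (DifferentiableAt.const_cpow (by fun_prop) (Or.inl hpne))
  have hΓ : DifferentiableAt ℂ
      (fun s : ℂ => (Complex.Gamma (s + (k:ℂ)/2) / Complex.Gamma ((k:ℂ)/2)) ^ 2) s := by
    have hk0 : (0:ℝ) < (k:ℝ)/2 := by
      have : (2:ℝ) ≤ (k:ℝ) := by exact_mod_cast hk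
      linarith
    have harg : ∀ m : ℕ, s + (k:ℂ)/2 ≠ -(m:ℂ) := by
      intro m h
      have hre : (s + (k:ℂ)/2).re = -(m:ℝ) := by rw [h]; simp
      have : (s + (k:ℂ)/2).re = s.re + (k:ℝ)/2 := by
        simp [Complex.add_re, Complex.div_re]
      rw [this] at hre
      have hm : (0:ℝ) ≤ (m:ℝ) := Nat.cast_nonneg m
      linarith
    have h1 : DifferentiableAt ℂ (fun s : ℂ => Complex.Gamma (s + (k:ℂ)/2)) s :=
      (Complex.differentiableAt_Gamma _ harg).comp s (by fun_prop)
    exact (h1.div_const _).pow 2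
  have hpol : DifferentiableAt ℂ (fun s : ℂ => (Polynomial.aeval s G : ℂ) ^ 2) s :=
    (Polynomial.differentiableAt_aeval G).pow 2
  have hyp : DifferentiableAt ℂ (fun s : ℂ => (y:ℂ) ^ (-s)) s := by
    have hyne : (y:ℂ) ≠ 0 := by
      simp only [ne_eq, Complex.ofReal_eq_zero]
      intro h; rw [h] at hy; linarith
    exact DifferentiableAt.const_cpow (by fun_prop) (Or.inl hyne)
  exact ((((hζ.mul hpe).mul hΓ).mul hpol).mul hyp).div differentiableAt_id hsne


lemma Kc_nonneg (k : ℕ) (G : Polynomial ℝ) (σ : ℝ) : 0 ≤ Kc k G σ := by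
  have h1 : (0:ℝ) ≤ ∑' n : ℕ, 1 / (n:ℝ) ^ (2:ℝ) := tsum_nonneg (fun n => by positivity)
  exact mul_nonneg (mul_nonneg (mul_nonneg h1 two_pos.le) (sq_nonneg _)) (sq_nonneg _)

lemma gg_cont (k p : ℕ) (hk : 2 ≤ k) (hp : p.Prime) (G : Polynomial ℝ) {y : ℝ}
    (hy : 1 ≤ y) {x : ℝ} (hx : 0 < x) :
    Continuous (fun t : ℝ => gg k p G y ((x:ℂ) + (t:ℂ) * I)) := by
  refine (gg_diffOn k p hk hp G hy).continuousOn.comp_continuous (by fun_prop) (fun t => ?_)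
  simp only [Set.mem_setOf_eq, Complex.add_re, Complex.ofReal_re, Complex.mul_re,
    Complex.ofReal_im, Complex.I_re, Complex.I_im]
  simpa using hx

lemma gg_bound2 (k p : ℕ) (hk : 2 ≤ k) (hp : p.Prime) (G : Polynomial ℝ) {σ : ℝ} (hσ : 2 ≤ σ)
    {y : ℝ} (hy : 1 ≤ y) {x t : ℝ} (hx2 : 2 ≤ x) (hxσ : x ≤ σ) :
    ‖gg k p G y ((x:ℂ) + (t:ℂ) * I)‖ ≤ Kc k G σ * ((max 1 |t|) ^ 2)⁻¹ := by
  refine (gg_bound k p hk hp G hσ hy hx2 hxσ).trans ?_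
  have hT1 : (1:ℝ) ≤ max 1 |t| := le_max_left _ _
  have hy1 : y ^ (-x) ≤ 1 := by
    refine Real.rpow_le_one_of_one_le_of_nonpos hy (by linarith)
  have h3 : ((max 1 |t|) ^ 3)⁻¹ ≤ ((max 1 |t|) ^ 2)⁻¹ := by
    refine inv_anti₀ (by positivity) ?_
    exact pow_le_pow_right₀ hT1 (by norm_num)
  have h4 : 0 ≤ Kc k G σ * ((max 1 |t|) ^ 3)⁻¹ :=
    mul_nonneg (Kc_nonneg k G σ) (by positivity)
  calc Kc k G σ * ((max 1 |t|) ^ 3)⁻¹ * y ^ (-x)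
      ≤ Kc k G σ * ((max 1 |t|) ^ 3)⁻¹ * 1 := mul_le_mul_of_nonneg_left hy1 h4
    _ = Kc k G σ * ((max 1 |t|) ^ 3)⁻¹ := mul_one _
    _ ≤ Kc k G σ * ((max 1 |t|) ^ 2)⁻¹ := mul_le_mul_of_nonneg_left h3 (Kc_nonneg k G σ)

lemma gg_integrable (k p : ℕ) (hk : 2 ≤ k) (hp : p.Prime) (G : Polynomial ℝ) {σ : ℝ}
    (hσ : 2 ≤ σ) {y : ℝ} (hy : 1 ≤ y) {x : ℝ} (hx2 : 2 ≤ x) (hxσ : x ≤ σ) :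
    Integrable (fun t : ℝ => gg k p G y ((x:ℂ) + (t:ℂ) * I)) := by
  refine Integrable.mono' (integrable_bound.const_mul (Kc k G σ))
    (gg_cont k p hk hp G hy (by linarith)).aestronglyMeasurable ?_
  exact Eventually.of_forall (fun t => gg_bound2 k p hk hp G hσ hy hx2 hxσ)

set_option maxHeartbeats 2000000 in
lemma integral_shift (k p : ℕ) (hk : 2 ≤ k) (hp : p.Prime) (G : Polynomial ℝ)
    {σ y : ℝ} (hσ : 2 ≤ σ) (hy : 1 ≤ y) :
    ∫ t : ℝ, gg k p G y (((2:ℝ):ℂ) + (t:ℂ) * I) =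
      ∫ t : ℝ, gg k p G y ((σ:ℂ) + (t:ℂ) * I) := by
  set f : ℂ → ℂ := gg k p G y with hf
  set K : ℝ := Kc k G σ with hK
  -- truncated integrals tend to full integrals
  have htrunc2 : Tendsto (fun T : ℝ => ∫ t in -T..T, f (((2:ℝ):ℂ) + (t:ℂ) * I)) atTop
      (𝓝 (∫ t : ℝ, f (((2:ℝ):ℂ) + (t:ℂ) * I))) :=
    intervalIntegral_tendsto_integral (gg_integrable k p hk hp G hσ hy le_rfl hσ)
      tendsto_neg_atTop_atBot tendsto_id
  have htruncσ : Tendsto (fun T : ℝ => ∫ t in -T..T, f ((σ:ℂ) + (t:ℂ) * I)) atTop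
      (𝓝 (∫ t : ℝ, f ((σ:ℂ) + (t:ℂ) * I))) :=
    intervalIntegral_tendsto_integral (gg_integrable k p hk hp G hσ hy hσ le_rfl)
      tendsto_neg_atTop_atBot tendsto_id
  -- rectangle identity
  have hrect : ∀ T : ℝ,
      I * (∫ t in -T..T, f (((2:ℝ):ℂ) + (t:ℂ) * I)) =
        I * (∫ t in -T..T, f ((σ:ℂ) + (t:ℂ) * I)) +
          ((∫ x in (2:ℝ)..σ, f ((x:ℂ) + ((-T:ℝ):ℂ) * I)) -
            ∫ x in (2:ℝ)..σ, f ((x:ℂ) + ((T:ℝ):ℂ) * I)) := by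
    intro T
    have hdiff : DifferentiableOn ℂ f ([[(2:ℝ), σ]] ×ℂ [[-T, T]]) := by
      refine (gg_diffOn k p hk hp G hy).mono (fun u hu => ?_)
      rw [mem_reProdIm] at hu
      have h1 : u.re ∈ [[(2:ℝ), σ]] := hu.1
      rw [uIcc_of_le hσ] at h1
      exact lt_of_lt_of_le two_pos h1.1
    have h0 := integral_boundary_rect_eq_zero_of_differentiableOn f
      (((2:ℝ):ℂ) + ((-T:ℝ):ℂ) * I) ((σ:ℂ) + ((T:ℝ):ℂ) * I) (by
        have e1 : ((((2:ℝ):ℂ) + ((-T:ℝ):ℂ) * I).re) = 2 := by simp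
        have e2 : ((((2:ℝ):ℂ) + ((-T:ℝ):ℂ) * I).im) = -T := by simp
        have e3 : (((σ:ℂ) + ((T:ℝ):ℂ) * I).re) = σ := by simp
        have e4 : (((σ:ℂ) + ((T:ℝ):ℂ) * I).im) = T := by simp
        rw [e1, e2, e3, e4]
        exact hdiff)
    have e1 : ((((2:ℝ):ℂ) + ((-T:ℝ):ℂ) * I).re) = 2 := by simp
    have e2 : ((((2:ℝ):ℂ) + ((-T:ℝ):ℂ) * I).im) = -T := by simp
    have e3 : (((σ:ℂ) + ((T:ℝ):ℂ) * I).re) = σ := by simp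
    have e4 : (((σ:ℂ) + ((T:ℝ):ℂ) * I).im) = T := by simp
    rw [e1, e2, e3, e4] at h0
    simp only [smul_eq_mul] at h0
    linear_combination -h0
  -- horizontal integrals tend to zero
  have hHb : ∀ τ : ℝ, 1 ≤ |τ| →
      ‖∫ x in (2:ℝ)..σ, f ((x:ℂ) + ((τ:ℝ):ℂ) * I)‖ ≤ K * (|τ| ^ 3)⁻¹ * |σ - 2| := by
    intro τ hτ
    refine intervalIntegral.norm_integral_le_of_norm_le_const (fun x hx => ?_)
    rw [Set.uIoc_of_le hσ] at hx
    have hb := gg_bound k p hk hp G hσ hy (x := x) (t := τ) (le_of_lt hx.1) hx.2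
    refine (hb.trans ?_)
    have hmax : |τ| ≤ max 1 |τ| := le_max_right _ _
    have hτ0 : (0:ℝ) < |τ| := by linarith
    have h5 : ((max 1 |τ|) ^ 3)⁻¹ ≤ (|τ| ^ 3)⁻¹ := by
      refine inv_anti₀ (by positivity) ?_
      exact pow_le_pow_left₀ (le_of_lt hτ0) hmax 3
    have hy1 : y ^ (-x) ≤ 1 :=
      Real.rpow_le_one_of_one_le_of_nonpos hy (by linarith [hx.1])
    calc K * ((max 1 |τ|) ^ 3)⁻¹ * y ^ (-x)
        ≤ K * ((max 1 |τ|) ^ 3)⁻¹ * 1 :=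
          mul_le_mul_of_nonneg_left hy1 (mul_nonneg (Kc_nonneg k G σ) (by positivity))
      _ = K * ((max 1 |τ|) ^ 3)⁻¹ := mul_one _
      _ ≤ K * (|τ| ^ 3)⁻¹ := mul_le_mul_of_nonneg_left h5 (Kc_nonneg k G σ)
  have hH : Tendsto (fun T : ℝ =>
      (∫ x in (2:ℝ)..σ, f ((x:ℂ) + ((-T:ℝ):ℂ) * I)) -
        ∫ x in (2:ℝ)..σ, f ((x:ℂ) + ((T:ℝ):ℂ) * I)) atTop (𝓝 0) := by
    have hg : Tendsto (fun T : ℝ => 2 * (K * (T ^ 3)⁻¹ * |σ - 2|)) atTop (𝓝 0) := by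
      have h1 : Tendsto (fun T : ℝ => (T ^ 3)⁻¹) atTop (𝓝 0) :=
        (tendsto_pow_atTop (by norm_num : 3 ≠ 0)).inv_tendsto_atTop
      have h2 : Tendsto (fun T : ℝ => 2 * (K * (T ^ 3)⁻¹ * |σ - 2|)) atTop
          (𝓝 (2 * (K * 0 * |σ - 2|))) := by
        exact (((h1.const_mul K).mul_const _).const_mul 2)
      simpa using h2
    refine squeeze_zero_norm' ?_ hg
    filter_upwards [eventually_ge_atTop (1:ℝ)] with T hT
    have h1 : |(-T:ℝ)| = T := by rw [abs_neg, _root_.abs_of_nonneg (by linarith)]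
    have h2 : |(T:ℝ)| = T := _root_.abs_of_nonneg (by linarith)
    refine (norm_sub_le _ _).trans ?_
    have b1 := hHb (-T) (by rw [h1]; exact hT)
    have b2 := hHb T (by rw [h2]; exact hT)
    rw [h1] at b1
    rw [h2] at b2
    calc ‖∫ x in (2:ℝ)..σ, f ((x:ℂ) + ((-T:ℝ):ℂ) * I)‖ +
          ‖∫ x in (2:ℝ)..σ, f ((x:ℂ) + ((T:ℝ):ℂ) * I)‖
        ≤ K * (T ^ 3)⁻¹ * |σ - 2| + K * (T ^ 3)⁻¹ * |σ - 2| := add_le_add b1 b2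
      _ = 2 * (K * (T ^ 3)⁻¹ * |σ - 2|) := by ring
  -- conclude
  have h1 : Tendsto (fun T : ℝ => I * ∫ t in -T..T, f (((2:ℝ):ℂ) + (t:ℂ) * I)) atTop
      (𝓝 (I * ∫ t : ℝ, f (((2:ℝ):ℂ) + (t:ℂ) * I))) := htrunc2.const_mul I
  have h2 : Tendsto (fun T : ℝ => I * (∫ t in -T..T, f ((σ:ℂ) + (t:ℂ) * I)) +
      ((∫ x in (2:ℝ)..σ, f ((x:ℂ) + ((-T:ℝ):ℂ) * I)) -
        ∫ x in (2:ℝ)..σ, f ((x:ℂ) + ((T:ℝ):ℂ) * I))) atTop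
      (𝓝 (I * (∫ t : ℝ, f ((σ:ℂ) + (t:ℂ) * I)) + 0)) := (htruncσ.const_mul I).add hH
  rw [show (fun T : ℝ => I * ∫ t in -T..T, f (((2:ℝ):ℂ) + (t:ℂ) * I)) = fun T : ℝ =>
      I * (∫ t in -T..T, f ((σ:ℂ) + (t:ℂ) * I)) +
      ((∫ x in (2:ℝ)..σ, f ((x:ℂ) + ((-T:ℝ):ℂ) * I)) -
        ∫ x in (2:ℝ)..σ, f ((x:ℂ) + ((T:ℝ):ℂ) * I)) from funext hrect] at h1
  have heq := tendsto_nhds_unique h1 h2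
  rw [add_zero] at heq
  exact mul_left_cancel₀ I_ne_zero heq


end Stmt11Aux

/-- `U(y) ≪_{j,k,p} y^{-j}` as `y → ∞`. -/
theorem stmt_11 (k : ℕ) (hk : 2 ≤ k) (hke : Even k) (p : ℕ) (hp : p.Prime)
    (G : Polynomial ℝ) (hdeg : 2 ≤ G.natDegree) (heven : ∀ x : ℝ, G.eval (-x) = G.eval x)
    (h0 : G.eval 0 = 1) (h1 : G.eval (-1) = 0) (h2 : G.eval (-2) = 0) :
    ∀ j : ℝ, 0 < j → ∃ C : ℝ, 0 < C ∧ ∀ y : ℝ, 1 ≤ y →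
      ‖Uint k p G y‖ ≤ C * y ^ (-j) := by
  intro j hj
  set σ : ℝ := j + 2 with hσdef
  have hσ2 : 2 ≤ σ := by rw [hσdef]; linarith
  set K : ℝ := Stmt11Aux.Kc k G σ with hK
  set CI : ℝ := ∫ t : ℝ, ((max 1 |t|) ^ 2)⁻¹ with hCI
  have hCI0 : 0 ≤ CI := integral_nonneg (fun t => by positivity)
  have hK0 : 0 ≤ K := Stmt11Aux.Kc_nonneg k G σ
  refine ⟨max 1 (1 / Real.pi * (K * CI)), lt_of_lt_of_le one_pos (le_max_left _ _), ?_⟩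
  intro y hy
  have hy0 : (0:ℝ) < y := by linarith
  have h2c : ((2:ℝ):ℂ) = (2:ℂ) := by norm_num
  have hU : Uint k p G y = (1 / Real.pi : ℂ) *
      ∫ t : ℝ, Stmt11Aux.gg k p G y (((2:ℝ):ℂ) + (t:ℂ) * Complex.I) := by
    rw [h2c]
    rfl
  rw [hU, Stmt11Aux.integral_shift k p hk hp G hσ2 hy]
  -- bound the line-σ integral
  have hb : ∀ t : ℝ, ‖Stmt11Aux.gg k p G y ((σ:ℂ) + (t:ℂ) * Complex.I)‖ ≤
      (K * y ^ (-σ)) * ((max 1 |t|) ^ 2)⁻¹ := by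
    intro t
    have hT1 : (1:ℝ) ≤ max 1 |t| := le_max_left _ _
    have h3 : ((max 1 |t|) ^ 3)⁻¹ ≤ ((max 1 |t|) ^ 2)⁻¹ := by
      refine inv_anti₀ (by positivity) ?_
      exact pow_le_pow_right₀ hT1 (by norm_num)
    calc ‖Stmt11Aux.gg k p G y ((σ:ℂ) + (t:ℂ) * Complex.I)‖
        ≤ K * ((max 1 |t|) ^ 3)⁻¹ * y ^ (-σ) :=
          Stmt11Aux.gg_bound k p hk hp G hσ2 hy hσ2 le_rfl
      _ ≤ K * ((max 1 |t|) ^ 2)⁻¹ * y ^ (-σ) := by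
          refine mul_le_mul_of_nonneg_right (mul_le_mul_of_nonneg_left h3 hK0) ?_
          positivity
      _ = (K * y ^ (-σ)) * ((max 1 |t|) ^ 2)⁻¹ := by ring
  have hgint : Integrable (fun t : ℝ => (K * y ^ (-σ)) * ((max 1 |t|) ^ 2)⁻¹) :=
    Stmt11Aux.integrable_bound.const_mul _
  have hline : ‖∫ t : ℝ, Stmt11Aux.gg k p G y ((σ:ℂ) + (t:ℂ) * Complex.I)‖ ≤
      (K * y ^ (-σ)) * CI := by
    refine (norm_integral_le_of_norm_le hgint (Eventually.of_forall hb)).trans_eq ?_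
    rw [MeasureTheory.integral_const_mul]
  -- conclude
  have hπ : ‖(1 / Real.pi : ℂ)‖ = 1 / Real.pi := by
    rw [norm_div, norm_one]
    congr 1
    rw [Complex.norm_real, Real.norm_eq_abs, _root_.abs_of_pos Real.pi_pos]
  rw [norm_mul, hπ]
  have hπ0 : (0:ℝ) < 1 / Real.pi := by positivity
  have habs : ‖(∫ t : ℝ, Stmt11Aux.gg k p G y ((σ:ℂ) + (t:ℂ) * Complex.I))‖ =
      ‖∫ t : ℝ, Stmt11Aux.gg k p G y ((σ:ℂ) + (t:ℂ) * Complex.I)‖ := rfl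
  rw [habs]
  have hyσj : y ^ (-σ) ≤ y ^ (-j) :=
    Real.rpow_le_rpow_of_exponent_le hy (by rw [hσdef]; linarith)
  calc 1 / Real.pi * ‖∫ t : ℝ, Stmt11Aux.gg k p G y ((σ:ℂ) + (t:ℂ) * Complex.I)‖
      ≤ 1 / Real.pi * ((K * y ^ (-σ)) * CI) :=
        mul_le_mul_of_nonneg_left hline hπ0.le
    _ = (1 / Real.pi * (K * CI)) * y ^ (-σ) := by ring
    _ ≤ max 1 (1 / Real.pi * (K * CI)) * y ^ (-σ) := by
        refine mul_le_mul_of_nonneg_right (le_max_right _ _) ?_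
        positivity
    _ ≤ max 1 (1 / Real.pi * (K * CI)) * y ^ (-j) := by
        refine mul_le_mul_of_nonneg_left hyσj ?_
        exact le_trans zero_le_one (le_max_left _ _)
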